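/- In the semigroup H, for any word U in the letters a1, a2, a3: L·U·U = 0. (Special case: the image under left multiplication by L of any square is zero.) -/

import Mathlib

inductive Phi
  | L | M | P | Q | R | g | s1 | s2 | t1 | t2 | t3 | a1 | a2 | a3
deriving DecidableEq

open Phi

abbrev W0 := WithZero (FreeMonoid Phi)

def w (l : List Phi) : W0 := ((FreeMonoid.ofList l : FreeMonoid Phi) : W0)

def ai : Fin 3 → Phi
  | 0 => a1 | 1 => a2 | 2 => a3

def ti : Fin 3 → Phi
  | 0 => t1 | 1 => t2 | 2 => t3

def si : Fin 2 → Phi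
  | 0 => s1 | 1 => s2

/-- `x` is one of the letters `a1, a2, a3`. -/
def isA (x : Phi) : Prop := x = a1 ∨ x = a2 ∨ x = a3

/-- The defining relations (1)–(14) of the semigroup `H`. -/
inductive rel : W0 → W0 → Prop
  | r1L (x : Phi) : rel (w [x, L]) 0
  | r1M (x : Phi) : rel (w [x, M]) 0
  | r2 : rel (w [L]) (w [M, P, g])
  | r3 (i : Fin 3) : rel (w [g, ai i]) (w [ai i, g])
  | r4 (x : Phi) (h : ¬ isA x) : rel (w [g, x]) 0
  | r5 (i j : Fin 3) : rel (w [ai i, g, ai j]) (w [ai i, R, s1, Q, ai j])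
  | r6 (i : Fin 3) (x : Phi) (h : x = R ∨ isA x) : rel (w [ti i, x]) (w [x, ti i])
  | r7 (i : Fin 3) : rel (w [P, ai i, ti i]) (w [ai i, P, s1])
  | r8 (i j : Fin 3) (h : i ≠ j) : rel (w [P, ai j, ti i]) (w [ai j, P, s2])
  | r9 (i : Fin 3) (j : Fin 2) : rel (w [si j, ai i]) (w [ai i, si j])
  | r10 : rel (w [s1, R]) (w [R, s1])
  | r11 (i : Fin 3) : rel (w [s1, Q, ai i]) (w [ti i, ai i, Q])
  | r12 : rel (w [P, R, s1]) 0
  | r13 (i : Fin 3) : rel (w [s2, R, ai i]) (w [ai i, s2, R])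
  | r14 (i : Fin 3) : rel (w [s2, R, Q, ai i]) (w [R, ti i, ai i, Q])

/-- The congruence on the free monoid with zero generated by the relations. -/
def hCon : Con W0 := conGen rel

/-- The semigroup (with zero) `H` of the paper. -/
abbrev H := hCon.Quotient

/-- The quotient map. -/
def q : W0 →* H := hCon.mk'

/-- `l` is a word in the letters `a1, a2, a3`. -/
def Aword (l : List Phi) : Prop := ∀ x ∈ l, isA x

/-- `l` is square-free: it contains no factor `Y ++ Y` with `Y` nonempty. -/
def SqFree (l : List Phi) : Prop := ∀ Y : List Phi, Y ≠ [] → ¬ (Y ++ Y) <:+: l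

section Aux
open Phi

lemma w_append (A B : List Phi) : w (A ++ B) = w A * w B := by
  unfold w; rw [← WithZero.coe_mul]; rfl

lemma q_rel {u v : W0} (h : rel u v) : q u = q v :=
  (Con.eq hCon).mpr (ConGen.Rel.of u v h)

lemma q_ctx (A B : List Phi) {u v : List Phi} (h : q (w u) = q (w v)) :
    q (w (A ++ u ++ B)) = q (w (A ++ v ++ B)) := by
  rw [w_append, w_append, w_append, w_append, map_mul, map_mul, map_mul, map_mul, h]

lemma q_ctx0 (A B : List Phi) {u : List Phi} (h : q (w u) = q 0) :
    q (w (A ++ u ++ B)) = q 0 := by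
  rw [w_append, w_append, map_mul, map_mul, h, ← map_mul, ← map_mul, mul_zero, zero_mul]

lemma isA_ex {x : Phi} (h : isA x) : ∃ i : Fin 3, x = ai i := by
  rcases h with h | h | h
  exacts [⟨0, h⟩, ⟨1, h⟩, ⟨2, h⟩]

def RAword (l : List Phi) : Prop := ∀ x ∈ l, x = R ∨ isA x

lemma g_comm {V : List Phi} (hV : Aword V) : q (w (g :: V)) = q (w (V ++ [g])) := by
  induction V with
  | nil => rfl
  | cons x V ih =>
    obtain ⟨i, rfl⟩ := isA_ex (hV x (List.mem_cons_self))
    have h1 := q_ctx [] V (q_rel (rel.r3 i))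
    have h2 := q_ctx [ai i] ([] : List Phi) (ih (fun y hy => hV y (List.mem_cons_of_mem _ hy)))
    simp only [List.nil_append, List.append_nil] at h1 h2
    calc q (w (g :: ai i :: V)) = q (w ([g, ai i] ++ V)) := rfl
      _ = q (w ([ai i, g] ++ V)) := h1
      _ = q (w ([ai i] ++ (g :: V))) := rfl
      _ = q (w ([ai i] ++ (V ++ [g]))) := h2
      _ = q (w ((ai i :: V) ++ [g])) := by simp

lemma t_comm (i : Fin 3) {V : List Phi} (hV : RAword V) :
    q (w (V ++ [ti i])) = q (w (ti i :: V)) := by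
  induction V with
  | nil => rfl
  | cons x V ih =>
    have h1 := q_ctx [x] ([] : List Phi) (ih (fun y hy => hV y (List.mem_cons_of_mem _ hy)))
    have h2 := q_ctx [] V (q_rel (rel.r6 i x (hV x (List.mem_cons_self)))).symm
    simp only [List.nil_append, List.append_nil] at h1 h2
    calc q (w ((x :: V) ++ [ti i])) = q (w ([x] ++ (V ++ [ti i]))) := by simp
      _ = q (w ([x] ++ (ti i :: V))) := h1
      _ = q (w ([x, ti i] ++ V)) := rfl
      _ = q (w ([ti i, x] ++ V)) := h2
      _ = q (w (ti i :: x :: V)) := rfl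

lemma s1_comm {V : List Phi} (hV : RAword V) :
    q (w (s1 :: V)) = q (w (V ++ [s1])) := by
  induction V with
  | nil => rfl
  | cons x V ih =>
    have hx : q (w [s1, x]) = q (w [x, s1]) := by
      rcases hV x (List.mem_cons_self) with h | h
      · subst h; exact q_rel rel.r10
      · obtain ⟨i, rfl⟩ := isA_ex h
        exact q_rel (rel.r9 i 0)
    have h1 := q_ctx [] V hx
    have h2 := q_ctx [x] ([] : List Phi) (ih (fun y hy => hV y (List.mem_cons_of_mem _ hy)))
    simp only [List.nil_append, List.append_nil] at h1 h2
    calc q (w (s1 :: x :: V)) = q (w ([s1, x] ++ V)) := rfl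
      _ = q (w ([x, s1] ++ V)) := h1
      _ = q (w ([x] ++ (s1 :: V))) := rfl
      _ = q (w ([x] ++ (V ++ [s1]))) := h2
      _ = q (w ((x :: V) ++ [s1])) := by simp

lemma isA_ai (i : Fin 3) : isA (ai i) := by
  fin_cases i <;> simp [ai, isA]

lemma aword_RA {V : List Phi} (hV : Aword V) : RAword V := fun x hx => Or.inr (hV x hx)

lemma RA_append {V D : List Phi} (hV : RAword V) (hD : RAword D) : RAword (V ++ D) := by
  intro x hx; rcases List.mem_append.mp hx with h | h
  exacts [hV x h, hD x h]

lemma loop : ∀ (V D : List Phi), Aword V → Aword D →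
    q (w ([M] ++ D ++ [P] ++ V ++ [R] ++ D ++ [s1, Q] ++ V)) = q 0 := by
  intro V
  induction V with
  | nil =>
    intro D _ hD
    -- word: M D P R D s1 Q ; move s1 left past D, then P R s1 = 0
    have h1 := q_ctx ([M] ++ D ++ [P, R]) [Q] (s1_comm (aword_RA hD)).symm
    have h2 := q_ctx0 ([M] ++ D) (D ++ [Q]) (q_rel rel.r12)
    calc q (w ([M] ++ D ++ [P] ++ [] ++ [R] ++ D ++ [s1, Q] ++ []))
        = q (w (([M] ++ D ++ [P, R]) ++ (D ++ [s1]) ++ [Q])) := by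
          congr 2; simp
      _ = q (w (([M] ++ D ++ [P, R]) ++ (s1 :: D) ++ [Q])) := h1
      _ = q (w (([M] ++ D) ++ [P, R, s1] ++ (D ++ [Q]))) := by
          congr 2; simp
      _ = q 0 := h2
  | cons x V ih =>
    intro D hxV hD
    obtain ⟨i, rfl⟩ := isA_ex (hxV x (List.mem_cons_self))
    have hV : Aword V := fun y hy => hxV y (List.mem_cons_of_mem _ hy)
    have hRA1 : RAword (V ++ [R] ++ D) :=
      RA_append (RA_append (aword_RA hV) (fun y hy => by simp at hy; exact Or.inl hy)) (aword_RA hD)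
    have hRA2 : RAword (V ++ [R] ++ D ++ [ai i]) :=
      RA_append hRA1 (fun y hy => by simp at hy; subst hy; exact Or.inr (isA_ai i))
    have h1 := q_ctx ([M] ++ D ++ [P] ++ (ai i :: V) ++ [R] ++ D) V (q_rel (rel.r11 i))
    have h2 := q_ctx ([M] ++ D ++ [P, ai i]) ([ai i, Q] ++ V) (t_comm i hRA1)
    have h3 := q_ctx ([M] ++ D) (V ++ [R] ++ D ++ [ai i, Q] ++ V) (q_rel (rel.r7 i))
    have h4 := q_ctx ([M] ++ D ++ [ai i, P]) ([Q] ++ V) (s1_comm hRA2)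
    calc q (w ([M] ++ D ++ [P] ++ (ai i :: V) ++ [R] ++ D ++ [s1, Q] ++ (ai i :: V)))
        = q (w (([M] ++ D ++ [P] ++ (ai i :: V) ++ [R] ++ D) ++ [s1, Q, ai i] ++ V)) := by
          congr 2; simp
      _ = q (w (([M] ++ D ++ [P] ++ (ai i :: V) ++ [R] ++ D) ++ [ti i, ai i, Q] ++ V)) := h1
      _ = q (w (([M] ++ D ++ [P, ai i]) ++ ((V ++ [R] ++ D) ++ [ti i]) ++ ([ai i, Q] ++ V))) := by
          congr 2; simp
      _ = q (w (([M] ++ D ++ [P, ai i]) ++ (ti i :: (V ++ [R] ++ D)) ++ ([ai i, Q] ++ V))) := h2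
      _ = q (w (([M] ++ D) ++ [P, ai i, ti i] ++ (V ++ [R] ++ D ++ [ai i, Q] ++ V))) := by
          congr 2; simp
      _ = q (w (([M] ++ D) ++ [ai i, P, s1] ++ (V ++ [R] ++ D ++ [ai i, Q] ++ V))) := h3
      _ = q (w (([M] ++ D ++ [ai i, P]) ++ (s1 :: (V ++ [R] ++ D ++ [ai i])) ++ ([Q] ++ V))) := by
          congr 2; simp
      _ = q (w (([M] ++ D ++ [ai i, P]) ++ ((V ++ [R] ++ D ++ [ai i]) ++ [s1]) ++ ([Q] ++ V))) := h4
      _ = q (w ([M] ++ (D ++ [ai i]) ++ [P] ++ V ++ [R] ++ (D ++ [ai i]) ++ [s1, Q] ++ V)) := by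
          congr 2; simp
      _ = q 0 := ih (D ++ [ai i]) hV (fun y hy => by
          rcases List.mem_append.mp hy with h | h
          · exact hD y h
          · simp at h; subst h; exact hxV _ (List.mem_cons_self))

end Aux


/-- for any nonempty word `U` in `a1,a2,a3`: `L·U·U = 0`. -/
theorem stmt16 (U : List Phi) (hU : Aword U) (hUne : U ≠ []) :
    q (w (L :: (U ++ U))) = q 0 := by
  rcases List.eq_nil_or_concat U with rfl | ⟨U0, y, hy⟩
  · exact absurd rfl hUne
  obtain ⟨z, U1, hz⟩ : ∃ z U1, U = z :: U1 := by
    cases U with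
    | nil => exact absurd rfl hUne
    | cons a l => exact ⟨a, l, rfl⟩
  obtain ⟨i, hi⟩ := isA_ex (hU y (by rw [hy]; simp))
  obtain ⟨j, hj⟩ := isA_ex (hU z (by rw [hz]; simp))
  rw [hi] at hy; rw [hj] at hz
  have hloop := loop U [] hU (by intro x hx; simp at hx)
  simp only [List.append_nil, List.nil_append] at hloop
  calc q (w (L :: (U ++ U))) = q (w ([] ++ [L] ++ (U ++ U))) := rfl
    _ = q (w ([] ++ [M, P, g] ++ (U ++ U))) := q_ctx [] (U ++ U) (q_rel rel.r2)
    _ = q (w ([M, P] ++ (g :: U) ++ U)) := by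
        rw [show ([] ++ [M, P, g] ++ (U ++ U) : List Phi) = [M, P] ++ (g :: U) ++ U by simp]
    _ = q (w ([M, P] ++ (U ++ [g]) ++ U)) := q_ctx [M, P] U (g_comm hU)
    _ = q (w (([M, P] ++ U0) ++ [ai i, g, ai j] ++ U1)) := by
        have hy' : U = U0 ++ [ai i] := by rw [hy, List.concat_eq_append]
        rw [show ([M, P] ++ (U ++ [g]) ++ U : List Phi)
            = ([M, P] ++ U0) ++ [ai i, g, ai j] ++ U1 by
          nth_rewrite 2 [hz]; rw [hy']; simp]
    _ = q (w (([M, P] ++ U0) ++ [ai i, R, s1, Q, ai j] ++ U1)) :=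
        q_ctx ([M, P] ++ U0) U1 (q_rel (rel.r5 i j))
    _ = q (w ([M] ++ [P] ++ U ++ [R] ++ [s1, Q] ++ U)) := by
        have hy' : U = U0 ++ [ai i] := by rw [hy, List.concat_eq_append]
        rw [show ([M] ++ [P] ++ U ++ [R] ++ [s1, Q] ++ U : List Phi)
            = ([M, P] ++ U0) ++ [ai i, R, s1, Q, ai j] ++ U1 by
          nth_rewrite 2 [hz]; rw [hy']; simp]
    _ = q 0 := hloop
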